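/- Let F be a field of characteristic different from 2 and 3, let d ∈ F with d ≠ 0, and let P = (x, y) be an affine F-rational point of the elliptic curve E_d : y² = x³ + d with x ≠ 0 and x³ + 4d ≠ 0. Define φ(P) := ((x³ + 4d)/x², y(x³ − 8d)/x³), an affine point of E'_d : y² = x³ − 27d, and φ̂(x', y') := ((x'³ − 108d)/(9x'²), y'(x'³ + 216d)/(27x'³)). Then φ̂(φ(P)) is a well-defined affine point of E_d and equals 3·P, the triple of P under the elliptic curve group law on E_d(F). -/

import Mathlib

set_option maxHeartbeats 2000000

open WeierstrassCurve.Affine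

private lemma some_eq_some' {F : Type*} [Field F] {W : WeierstrassCurve.Affine F}
    {x₁ y₁ x₂ y₂ : F} (hx : x₁ = x₂) (hy : y₁ = y₂) (h₁ : W.Nonsingular x₁ y₁)
    (h₂ : W.Nonsingular x₂ y₂) : Point.some _ _ h₁ = Point.some _ _ h₂ := by
  subst hx; subst hy; rfl

open Classical in
theorem sextic_dual_isogeny_comp_eq_three_smul {F : Type*} [Field F]
    (h2 : (2 : F) ≠ 0) (h3 : (3 : F) ≠ 0) (d : F) (hd : d ≠ 0)
    (x y : F) (hx : x ≠ 0) (hx4 : x ^ 3 + 4 * d ≠ 0)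
    (hP : WeierstrassCurve.Affine.Nonsingular
      (⟨0, 0, 0, 0, d⟩ : WeierstrassCurve.Affine F) x y) :
    ∃ h' : WeierstrassCurve.Affine.Nonsingular
        (⟨0, 0, 0, 0, d⟩ : WeierstrassCurve.Affine F)
        ((((x ^ 3 + 4 * d) / x ^ 2) ^ 3 - 108 * d) / (9 * ((x ^ 3 + 4 * d) / x ^ 2) ^ 2))
        ((y * (x ^ 3 - 8 * d) / x ^ 3) * (((x ^ 3 + 4 * d) / x ^ 2) ^ 3 + 216 * d) /
          (27 * ((x ^ 3 + 4 * d) / x ^ 2) ^ 3)),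
      WeierstrassCurve.Affine.Point.some _ _ h' =
        3 • WeierstrassCurve.Affine.Point.some _ _ hP := by
  have h4 : (4:F) ≠ 0 := by
    have h : (4:F) = 2^2 := by norm_num
    rw [h]; exact pow_ne_zero _ h2
  have h8 : (8:F) ≠ 0 := by
    have h : (8:F) = 2^3 := by norm_num
    rw [h]; exact pow_ne_zero _ h2
  have h9 : (9:F) ≠ 0 := by
    have h : (9:F) = 3^2 := by norm_num
    rw [h]; exact pow_ne_zero _ h3
  have h27 : (27:F) ≠ 0 := by
    have h : (27:F) = 3^3 := by norm_num
    rw [h]; exact pow_ne_zero _ h3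
  have h6 : (6:F) ≠ 0 := by
    have h : (6:F) = 2*3 := by norm_num
    rw [h]; exact mul_ne_zero h2 h3
  have h81 : (81:F) ≠ 0 := by
    have h : (81:F) = 3^4 := by norm_num
    rw [h]; exact pow_ne_zero _ h3
  have hnum : ∀ a b : ℕ, ((2^a * 3^b : ℕ) : F) ≠ 0 := by
    intro a b
    push_cast
    exact mul_ne_zero (pow_ne_zero _ h2) (pow_ne_zero _ h3)
  have h12 : (12:F) ≠ 0 := by have := hnum 2 1; norm_num at this ⊢; exact this
  have h16 : (16:F) ≠ 0 := by have := hnum 4 0; norm_num at this ⊢; exact this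
  have h24 : (24:F) ≠ 0 := by have := hnum 3 1; norm_num at this ⊢; exact this
  have h36 : (36:F) ≠ 0 := by have := hnum 2 2; norm_num at this ⊢; exact this
  have h48 : (48:F) ≠ 0 := by have := hnum 4 1; norm_num at this ⊢; exact this
  have h72 : (72:F) ≠ 0 := by have := hnum 3 2; norm_num at this ⊢; exact this
  have h144 : (144:F) ≠ 0 := by have := hnum 4 2; norm_num at this ⊢; exact this
  have h216 : (216:F) ≠ 0 := by have := hnum 3 3; norm_num at this ⊢; exact this
  have h432 : (432:F) ≠ 0 := by have := hnum 4 3; norm_num at this ⊢; exact this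
  have h1296 : (1296:F) ≠ 0 := by have := hnum 4 4; norm_num at this ⊢; exact this
  have h3456 : (3456:F) ≠ 0 := by have := hnum 7 3; norm_num at this ⊢; exact this
  let W : WeierstrassCurve.Affine F := ⟨0, 0, 0, 0, d⟩
  have hW : W = ⟨0, 0, 0, 0, d⟩ := rfl
  have hE : y ^ 2 = x ^ 3 + d := by
    have h := hP.1
    rw [equation_iff] at h
    simpa [hW] using h
  by_cases hy0 : y = 0
  · -- 2-torsion case: 3 • P = P
    have hd' : d = -x ^ 3 := by linear_combination -hE + hy0 * y
    have hX : (((x ^ 3 + 4 * d) / x ^ 2) ^ 3 - 108 * d) / (9 * ((x ^ 3 + 4 * d) / x ^ 2) ^ 2)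
        = x := by
      have hq : (x ^ 3 + 4 * d)/x^2 = -3*x := by rw [hd']; field_simp; ring
      have hden : (9:F)*(-3*x)^2 ≠ 0 := by
        have h : (9:F)*(-3*x)^2 = 81*x^2 := by ring
        rw [h]; exact mul_ne_zero h81 (pow_ne_zero _ hx)
      rw [hq, div_eq_iff hden, hd']; ring
    have hY : (y * (x ^ 3 - 8 * d) / x ^ 3) * (((x ^ 3 + 4 * d) / x ^ 2) ^ 3 + 216 * d) /
          (27 * ((x ^ 3 + 4 * d) / x ^ 2) ^ 3) = y := by
      rw [hy0]; ring_nf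
    have h3P : (3 : ℕ) • Point.some _ _ hP = Point.some _ _ hP := by
      have h2P : Point.some _ _ hP + Point.some _ _ hP = 0 :=
        Point.add_self_of_Y_eq (by simp [hW, negY, hy0])
      rw [succ_nsmul, two_nsmul, h2P, zero_add]
    refine ⟨by rw [hX, hY]; exact hP, ?_⟩
    rw [h3P]
    exact some_eq_some' hX hY _ _
  · obtain ⟨t, ht, ht0⟩ : ∃ t : F, t = x ^ 3 + 4 * d ∧ t ≠ 0 := ⟨_, rfl, hx4⟩
    have hy' : y ≠ W.negY x y := by
      simp only [hW, negY]
      intro h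
      apply hy0
      have h0 : 2 * y = 0 := by linear_combination h
      exact (mul_eq_zero.mp h0).resolve_left h2
    set L : F := W.slope x x y y with hLdef
    have hL : L = 3 * x ^ 2 / (2 * y) := by
      rw [hLdef, slope_of_Y_ne rfl hy']
      simp only [hW, negY]
      ring_nf
    have hy2 : (y:F) ≠ 0 := hy0
    have hx2 : W.addX x x L ≠ x := by
      simp only [addX, hW, hL]
      intro h
      apply hx4
      field_simp [h4] at h
      have h0 : 3 * (x * (x ^ 3 + 4 * d)) = 0 := by linear_combination -h - 12*x*hE
      have h1 := (mul_eq_zero.mp h0).resolve_left h3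
      exact (mul_eq_zero.mp h1).resolve_left hx
    have h2P := nonsingular_add hP hP (fun h => hy' h.2)
    set x₂ : F := W.addX x x L with hx2def
    set y₂ : F := W.addY x x y L with hy2def
    set L₂ : F := W.slope x₂ x y₂ y with hL2def
    have h3P : (3 : ℕ) • Point.some _ _ hP =
        Point.some _ _ (nonsingular_add h2P hP (fun h => hx2 h.1)) := by
      rw [succ_nsmul, two_nsmul, Point.add_self_of_Y_ne hy', Point.add_of_X_ne hx2]
    have hXv : x₂ = (9*x^4 - 8*x*y^2) / (4*y^2) := by
      rw [hx2def]
      simp only [addX, hW, hL]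
      field_simp [h4]
      ring
    have hYv : y₂ = (-27*x^6 + 36*x^3*y^2 - 8*y^4)/(8*y^3) := by
      rw [hy2def]
      simp only [addY, negAddY, negY, addX, hW, hL]
      field_simp [h8]
      ring
    have hL2v : L₂ = (27*x^6 - 36*x^3*y^2 + 16*y^4)/(6*x*y*t) := by
      rw [hL2def, slope_of_X_ne hx2, div_eq_div_iff (sub_ne_zero.mpr hx2)
        (mul_ne_zero (mul_ne_zero (mul_ne_zero h6 hx) hy2) ht0)]
      rw [hXv, hYv]
      field_simp [h8]
      rw [show t = 4*y^2 - 3*x^3 by linear_combination ht - 4*hE]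
      ring
    have htX : (((x ^ 3 + 4 * d) / x ^ 2) ^ 3 - 108 * d) / (9 * ((x ^ 3 + 4 * d) / x ^ 2) ^ 2)
        = (t^3 - 108*d*x^6)/(9*x^2*t^2) := by
      rw [ht]
      field_simp
    have htY : (y * (x ^ 3 - 8 * d) / x ^ 3) * (((x ^ 3 + 4 * d) / x ^ 2) ^ 3 + 216 * d) /
          (27 * ((x ^ 3 + 4 * d) / x ^ 2) ^ 3)
        = y*(x^3-8*d)*(t^3 + 216*d*x^6)/(27*x^3*t^3) := by
      rw [ht]
      field_simp
    have hX : (((x ^ 3 + 4 * d) / x ^ 2) ^ 3 - 108 * d) / (9 * ((x ^ 3 + 4 * d) / x ^ 2) ^ 2)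
        = W.addX x₂ x L₂ := by
      rw [htX]
      simp only [addX, hW]
      rw [hL2v, hXv, div_eq_iff (mul_ne_zero (mul_ne_zero h9 (pow_ne_zero 2 hx)) (pow_ne_zero 2 ht0))]
      field_simp [h144, h24]
      rw [show t = 4*y^2 - 3*x^3 by linear_combination ht - 4*hE, show d = y^2 - x^3 by linear_combination -hE]
      ring
    have hY : (y * (x ^ 3 - 8 * d) / x ^ 3) * (((x ^ 3 + 4 * d) / x ^ 2) ^ 3 + 216 * d) /
          (27 * ((x ^ 3 + 4 * d) / x ^ 2) ^ 3) = W.addY x₂ x y₂ L₂ := by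
      have hXadd : W.addX x₂ x L₂ = (t^3 - 108*d*x^6)/(9*x^2*t^2) := hX.symm.trans htX
      rw [htY]
      simp only [addY, negAddY, negY, hW]
      rw [hXadd, hL2v, hXv, hYv, div_eq_iff (mul_ne_zero (mul_ne_zero h27 (pow_ne_zero 3 hx)) (pow_ne_zero 3 ht0))]
      field_simp [h144, h24]
      have hK : 6*x*y*t*(9*x^2*t^2*(4*y^2)) ≠ 0 :=
        mul_ne_zero (mul_ne_zero (mul_ne_zero (mul_ne_zero h6 hx) hy2) ht0)
          (mul_ne_zero (mul_ne_zero (mul_ne_zero h9 (pow_ne_zero 2 hx)) (pow_ne_zero 2 ht0))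
            (mul_ne_zero h4 (pow_ne_zero 2 hy2)))
      rw [show t = 4*y^2 - 3*x^3 by linear_combination ht - 4*hE, show d = y^2 - x^3 by linear_combination -hE]
      ring
    refine ⟨by rw [hX, hY]; exact nonsingular_add h2P hP (fun h => hx2 h.1), ?_⟩
    rw [h3P]
    exact some_eq_some' hX hY _ _
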